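/- Let p be a prime, ι an arbitrary index set, and A a finite abelian p-group given the discrete topology. Then the group of continuous group homomorphisms from the product ∏_{i ∈ ι} ℤ_p (with the product topology, each factor the p-adic integers) to A is isomorphic to the direct sum ⨁_{i ∈ ι} A (the group of finitely supported functions ι → A). -/

import Mathlib

open PadicInt Filter Topology

/-- Let `p` be a prime, `ι` an arbitrary index set, and `A` a finite
abelian `p`-group with the discrete topology.  Then the group of continuous group
homomorphisms from `∏_{i ∈ ι} ℤ_p` (with the product topology) to `A` is isomorphic to
the direct sum `⨁_{i ∈ ι} A` of copies of `A`, i.e. the group of finitely supported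
functions `ι → A`. -/
theorem continuousHom_pi_padicInt_iso_directSum
    (p : ℕ) [Fact p.Prime] (ι : Type*)
    (A : Type*) [AddCommGroup A] [Finite A]
    [TopologicalSpace A] [DiscreteTopology A] [IsTopologicalAddGroup A]
    (hA : ∃ n : ℕ, Nat.card A = p ^ n) :
    Nonempty (ContinuousAddMonoidHom (ι → ℤ_[p]) A ≃+ (ι →₀ A)) := by
  classical
  obtain ⟨n, hn⟩ := hA
  have hp : (1 : ℕ) < p := (Fact.out : p.Prime).one_lt
  have hzero : ∀ a : A, (p ^ n) • a = 0 := fun a => by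
    rw [← hn]; exact card_nsmul_eq_zero'
  letI : Module (ZMod (p ^ n)) A := AddCommGroup.zmodModule hzero
  -- continuity of `z ↦ toZModPow n z • a`
  have hcont : ∀ a : A, Continuous fun z : ℤ_[p] => (toZModPow n z : ZMod (p ^ n)) • a := by
    intro a
    rw [continuous_iff_continuousAt]
    intro z₀
    have hball : Metric.closedBall z₀ ((p : ℝ) ^ (-(n : ℤ))) ∈ 𝓝 z₀ :=
      Metric.closedBall_mem_nhds z₀ (by positivity)
    have h1 : (fun z : ℤ_[p] => (toZModPow n z : ZMod (p ^ n)) • a)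
        =ᶠ[𝓝 z₀] fun _ => (toZModPow n z₀ : ZMod (p ^ n)) • a := by
      filter_upwards [hball] with z hz
      congr 1
      have hker : z - z₀ ∈ RingHom.ker (toZModPow (p := p) n) := by
        rw [ker_toZModPow, ← norm_le_pow_iff_mem_span_pow]
        simpa [dist_eq_norm] using hz
      rw [RingHom.mem_ker, map_sub, sub_eq_zero] at hker
      exact hker
    exact h1.continuousAt
  -- single-variable structure of continuous homs `ℤ_p → A`
  have key : ∀ (ψ : ℤ_[p] →+ A), Continuous ψ →
      ∀ z : ℤ_[p], ψ z = (toZModPow n z : ZMod (p ^ n)) • ψ 1 := by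
    intro ψ hψ z
    have heq : (⇑ψ : ℤ_[p] → A) = fun z => (toZModPow n z : ZMod (p ^ n)) • ψ 1 := by
      refine denseRange_natCast.equalizer hψ (hcont (ψ 1)) (funext fun m => ?_)
      show ψ (m : ℤ_[p]) = (toZModPow n ((m : ℤ_[p])) : ZMod (p ^ n)) • ψ 1
      rw [map_natCast (toZModPow n), Nat.cast_smul_eq_nsmul, ← map_nsmul]
      congr 1
      simp [nsmul_eq_mul]
    exact congrFun heq z
  -- the backward map `G : (ι →₀ A) →+ Hom`
  let Ψ : ι → A →+ ContinuousAddMonoidHom (ι → ℤ_[p]) A := fun i =>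
    { toFun := fun a =>
        ⟨{ toFun := fun x => (toZModPow n (x i) : ZMod (p ^ n)) • a
           map_zero' := by simp
           map_add' := by intro x y; simp [add_smul] },
         (hcont a).comp (continuous_apply i)⟩
      map_zero' := by ext x; exact smul_zero _
      map_add' := by intro a b; ext x; exact smul_add _ a b }
  let G : (ι →₀ A) →+ ContinuousAddMonoidHom (ι → ℤ_[p]) A := Finsupp.liftAddHom Ψ
  -- evaluation at a point is additive
  let ev : (ι → ℤ_[p]) → (ContinuousAddMonoidHom (ι → ℤ_[p]) A →+ A) := fun x =>
    { toFun := fun φ => φ x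
      map_zero' := rfl
      map_add' := fun φ ψ => rfl }
  have hGapply : ∀ (f : ι →₀ A) (x : ι → ℤ_[p]),
      G f x = f.sum fun i a => (toZModPow n (x i) : ZMod (p ^ n)) • a := by
    intro f x
    show ev x (Finsupp.liftAddHom Ψ f) = _
    rw [Finsupp.liftAddHom_apply, map_finsuppSum]
    rfl
  -- every continuous hom kills a basic open set
  have hS : ∀ φ : ContinuousAddMonoidHom (ι → ℤ_[p]) A, ∃ S : Finset ι,
      ∀ x : ι → ℤ_[p], (∀ i ∈ S, x i = 0) → φ x = 0 := by
    intro φ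
    have h0 : φ ⁻¹' {0} ∈ 𝓝 (0 : ι → ℤ_[p]) := by
      refine (map_continuous φ).continuousAt.preimage_mem_nhds ?_
      have h00 : φ (0 : ι → ℤ_[p]) = 0 := map_zero φ
      rw [h00]
      exact IsOpen.mem_nhds (isOpen_discrete _) rfl
    rw [nhds_pi, Filter.mem_pi] at h0
    obtain ⟨I, hIfin, V, hV, hVsub⟩ := h0
    refine ⟨hIfin.toFinset, fun x hx => ?_⟩
    have : x ∈ Set.pi I V := by
      intro i hi
      rw [hx i (hIfin.mem_toFinset.mpr hi)]
      exact mem_of_mem_nhds (hV i)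
    exact hVsub this
  choose S hSprop using hS
  have hsupp : ∀ (φ : ContinuousAddMonoidHom (ι → ℤ_[p]) A) (i : ι),
      i ∉ S φ → φ (Pi.single i 1) = 0 := by
    intro φ i hi
    refine hSprop φ _ fun j hj => Pi.single_eq_of_ne (ne_of_mem_of_not_mem hj hi) 1
  -- the forward map
  let F : ContinuousAddMonoidHom (ι → ℤ_[p]) A → (ι →₀ A) := fun φ =>
    Finsupp.ofSupportFinite (fun i => φ (Pi.single i 1))
      ((S φ).finite_toSet.subset fun i hi => by
        by_contra h
        exact hi (hsupp φ i h))
  have hFcoe : ∀ φ i, F φ i = φ (Pi.single i 1) := fun φ i => rfl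
  -- decomposition of a continuous hom over a killing finset
  have hdecomp : ∀ (φ : ContinuousAddMonoidHom (ι → ℤ_[p]) A) (x : ι → ℤ_[p]),
      φ x = ∑ i ∈ S φ, (toZModPow n (x i) : ZMod (p ^ n)) • φ (Pi.single i 1) := by
    intro φ x
    have h1 : φ (x - ∑ i ∈ S φ, Pi.single i (x i)) = 0 := by
      refine hSprop φ _ fun j hj => ?_
      simp only [Pi.sub_apply, Finset.sum_apply, Pi.single_apply, sub_eq_zero]
      rw [Finset.sum_ite_eq (S φ) j (fun i => x i), if_pos hj]
    rw [map_sub, sub_eq_zero] at h1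
    rw [h1, map_sum]
    refine Finset.sum_congr rfl fun i _ => ?_
    have hcomp : Continuous fun z : ℤ_[p] => φ (Pi.single i z) :=
      (map_continuous φ).comp (continuous_single (A := fun _ : ι => ℤ_[p]) i)
    have := key ((φ.toAddMonoidHom).comp (AddMonoidHom.single (fun _ : ι => ℤ_[p]) i))
      hcomp (x i)
    simpa using this
  -- left inverse: F (G f) = f
  have hli : ∀ f : ι →₀ A, F (G f) = f := by
    intro f
    ext i
    rw [hFcoe, hGapply]
    have hstep : (f.sum fun j a =>
          (toZModPow n ((Pi.single i (1 : ℤ_[p]) : ι → ℤ_[p]) j) : ZMod (p ^ n)) • a)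
        = f.sum fun j a => if j = i then a else 0 := by
      refine Finsupp.sum_congr fun j _ => ?_
      by_cases h : j = i
      · subst h; simp
      · simp [Pi.single_eq_of_ne h, h]
    rw [hstep, Finsupp.sum_ite_self_eq' f i]
  -- right inverse: G (F φ) = φ
  have hri : ∀ φ : ContinuousAddMonoidHom (ι → ℤ_[p]) A, G (F φ) = φ := by
    intro φ
    ext x
    rw [hGapply, hdecomp φ x, Finsupp.sum]
    refine Finset.sum_subset ?_ ?_
    · intro i hi
      by_contra h
      exact (Finsupp.mem_support_iff.mp hi) (by rw [hFcoe]; exact hsupp φ i h)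
    · intro i _ hi
      rw [Finsupp.notMem_support_iff.mp hi, smul_zero]
  refine ⟨(AddEquiv.ofBijective G ⟨?_, fun φ => ⟨F φ, hri φ⟩⟩).symm⟩
  intro f g h
  rw [← hli f, ← hli g, h]
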